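/- Let G be a strong M-graph, let v'_1, v'_2 be real vertices belonging to a single connected component of G(ℝ), and let v''_1, v''_2 be real vertices belonging to a single connected component of G(ℝ). Then the divisors v'_1 + v'_2 and v''_1 + v''_2 are linearly equivalent on G. -/

import Mathlib

/-- A finite graph: finite sets of vertices and edges, and an incidence map
assigning to each edge the (unordered) pair of its ends (loops and multiple
edges are allowed). -/
structure FinGraph where
  V : Type
  E : Type
  [decV : DecidableEq V]
  [fintV : Fintype V]
  [fintE : Fintype E]
  ψ : E → Sym2 V

attribute [instance] FinGraph.decV FinGraph.fintV FinGraph.fintE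

namespace FinGraph

variable (G : FinGraph)

/-- Two vertices are adjacent if some edge has exactly them as its ends. -/
def Adj (v w : G.V) : Prop := ∃ e : G.E, G.ψ e = s(v, w)

/-- A graph is connected if it is nonempty and any two vertices are joined by a
walk (equivalently, related by the reflexive-transitive closure of adjacency). -/
def Connected : Prop := Nonempty G.V ∧ ∀ v w : G.V, Relation.ReflTransGen G.Adj v w

/-- The number of connected components. -/
noncomputable def numComponents : ℕ :=
  Nat.card (Quotient (Relation.EqvGen.setoid G.Adj))

/-- The genus `g(G) = c(G) + e(G) - v(G)`. -/
noncomputable def genus : ℤ :=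
  (numComponents G : ℤ) + (Fintype.card G.E : ℤ) - (Fintype.card G.V : ℤ)

/-- A real structure on a finite graph: involutions on vertices and edges
compatible with the incidence map. -/
structure RealStructure (G : FinGraph) where
  ιV : G.V → G.V
  ιE : G.E → G.E
  ιV_invol : ∀ v, ιV (ιV v) = v
  ιE_invol : ∀ e, ιE (ιE e) = e
  compat : ∀ e, G.ψ (ιE e) = (G.ψ e).map ιV

variable {G} (σ : RealStructure G)

/-- A vertex is real if it is fixed by the involution. -/
def RealV (v : G.V) : Prop := σ.ιV v = v

/-- An edge is real if it is fixed by the involution. -/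
def RealE (e : G.E) : Prop := σ.ιE e = e

/-- A real edge is isolated if some end of it is not a real vertex. -/
def IsolatedRealE (e : G.E) : Prop := RealE σ e ∧ ∃ v ∈ G.ψ e, ¬ RealV σ v

/-- A non-isolated real edge: a real edge all of whose ends are real vertices. -/
def NonIsolatedRealE (e : G.E) : Prop := RealE σ e ∧ ∀ v ∈ G.ψ e, RealV σ v

/-- The vertex set of the real locus graph `G(ℝ)`: the real vertices. -/
def RV := {v : G.V // RealV σ v}

/-- Adjacency in the real locus graph `G(ℝ)`: via non-isolated real edges. -/
def adjR (v w : RV σ) : Prop :=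
  ∃ e : G.E, NonIsolatedRealE σ e ∧ G.ψ e = s(v.1, w.1)

/-- The connected components of the real locus graph `G(ℝ)`. -/
def CompR := Quotient (Relation.EqvGen.setoid (adjR σ))

/-- The genus of a connected component of `G(ℝ)`:
`1 + (number of its edges) - (number of its vertices)`. -/
noncomputable def compGenus (c : CompR σ) : ℤ :=
  1 + (Nat.card {e : G.E // NonIsolatedRealE σ e ∧
        ∃ v : RV σ, v.1 ∈ G.ψ e ∧ Quotient.mk (Relation.EqvGen.setoid (adjR σ)) v = c} : ℤ)
    - (Nat.card {v : RV σ // Quotient.mk (Relation.EqvGen.setoid (adjR σ)) v = c} : ℤ)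

/-- The number `s(G) = e^i(G) + Σ_i (g(G(ℝ)_i) + 1)`. -/
noncomputable def sNum : ℤ :=
  (Nat.card {e : G.E // IsolatedRealE σ e} : ℤ) + ∑ᶠ c : CompR σ, (compGenus σ c + 1)

/-- One step of a walk containing no real vertex and no real edge. -/
def nonRealAdj (v w : G.V) : Prop :=
  ¬ RealV σ v ∧ ¬ RealV σ w ∧ ∃ e : G.E, ¬ RealE σ e ∧ G.ψ e = s(v, w)

/-- `a(G) = 1` iff there is a non-real vertex `v` and a walk from `v` to `v̄`
containing no real vertex and no real edge. -/
def aProp : Prop :=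
  ∃ v : G.V, ¬ RealV σ v ∧ Relation.ReflTransGen (nonRealAdj σ) v (σ.ιV v)

/-- `a(G)` as a number. -/
noncomputable def aNum : ℕ := @ite _ (aProp σ) (Classical.dec _) 1 0

/-- The degree of a divisor (a divisor on `G` is a function `G.V → ℤ`). -/
def deg (D : G.V → ℤ) : ℤ := ∑ v, D v

/-- A divisor is effective if all its coefficients are nonnegative. -/
def Eff (D : G.V → ℤ) : Prop := ∀ v, 0 ≤ D v

variable (G)

/-- The contribution of the edge `e` to the principal divisor `Δ(f)`. -/
def edgeLap (f : G.V → ℤ) (e : G.E) : G.V → ℤ :=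
  Sym2.lift ⟨fun a b v => (if v = a then f b - f a else 0) + (if v = b then f a - f b else 0),
    fun a b => funext fun v => add_comm _ _⟩ (G.ψ e)

/-- The principal divisor `Δ(f)(v) = Σ_{e, ψ(e) = {v,w}} (f(w) - f(v))`. -/
def Lap (f : G.V → ℤ) : G.V → ℤ := fun v => ∑ e, edgeLap G f e v

/-- Two divisors are linearly equivalent if their difference is principal. -/
def LinEquiv (D₁ D₂ : G.V → ℤ) : Prop := ∃ f : G.V → ℤ, D₂ = D₁ + Lap G f

variable {G}

/-- The conjugate divisor `D̄(v) = D(v̄)`. -/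
def conjDiv (D : G.V → ℤ) : G.V → ℤ := fun v => D (σ.ιV v)

/-- A divisor is real if it equals its conjugate. -/
def IsRealDiv (D : G.V → ℤ) : Prop := conjDiv σ D = D

variable (G)

/-- The divisor consisting of the single vertex `v`. -/
def unitDiv (v : G.V) : G.V → ℤ := fun w => if w = v then 1 else 0

/-- `RankGE G D r` : every effective divisor `E` of degree `r` is dominated by
some effective divisor `D'` linearly equivalent to `D`.  The rank `rk(D)` is
the greatest `r` with this property (note it holds vacuously for `r < 0`, so
the greatest such `r` is `-1` exactly when `|D| = ∅`). -/
def RankGE (D : G.V → ℤ) (r : ℤ) : Prop :=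
  ∀ E : G.V → ℤ, Eff E → deg E = r →
    ∃ D' : G.V → ℤ, LinEquiv G D D' ∧ Eff D' ∧ Eff (D' - E)

/-- `r` is the rank of `D`: it is the greatest element of `{r | RankGE G D r}`. -/
def HasRank (D : G.V → ℤ) (r : ℤ) : Prop := IsGreatest {r' : ℤ | RankGE G D r'} r

variable {G}

/-- The real analogue of `RankGE`, using real effective divisors only. -/
def RealRankGE (D : G.V → ℤ) (r : ℤ) : Prop :=
  ∀ E : G.V → ℤ, Eff E → IsRealDiv σ E → deg E = r →
    ∃ D' : G.V → ℤ, LinEquiv G D D' ∧ Eff D' ∧ IsRealDiv σ D' ∧ Eff (D' - E)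

/-- `r` is the real rank of `D`. -/
def HasRealRank (D : G.V → ℤ) (r : ℤ) : Prop :=
  IsGreatest {r' : ℤ | RealRankGE σ D r'} r

/-- An M-graph: a connected graph with a real structure, no isolated real
edges, and `s(G) = g(G) + 1`. -/
def IsMGraph : Prop :=
  G.Connected ∧ (∀ e : G.E, ¬ IsolatedRealE σ e) ∧ sNum σ = G.genus + 1

/-- A strong M-graph: an M-graph such that `G(ℝ)` has `g(G) + 1` connected
components. -/
def IsStrongMGraph : Prop :=
  IsMGraph σ ∧ (Nat.card (CompR σ) : ℤ) = G.genus + 1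

/-- The degree of the restriction of a divisor to the connected component `c`
of the real locus graph `G(ℝ)`. -/
noncomputable def degOn (c : CompR σ) (D : G.V → ℤ) : ℤ :=
  ∑ᶠ (v : {v : RV σ // Quotient.mk (Relation.EqvGen.setoid (adjR σ)) v = c}), D v.1.1

/-- The valence of a vertex: the number of edges incident to it. -/
noncomputable def valence (v : G.V) : ℤ := (Nat.card {e : G.E // v ∈ G.ψ e} : ℤ)

/-- The canonical divisor `K_G = Σ_v (val(v) - 2) v`. -/
noncomputable def canonicalDiv : G.V → ℤ := fun v => valence v - 2

end FinGraph


section AuxMGraph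
open Relation

lemma eqvGen_bot {X : Type} {x y : X} (h : Relation.EqvGen (fun _ _ => False) x y) : x = y := by
  induction h with
  | rel _ _ h => exact h.elim
  | refl => rfl
  | symm _ _ _ ih => exact ih.symm
  | trans _ _ _ _ _ ih1 ih2 => exact ih1.trans ih2

lemma rtg_eqvGen {X : Type} {r : X → X → Prop} {x y : X} (h : Relation.ReflTransGen r x y) :
    Relation.EqvGen r x y := by
  induction h with
  | refl => exact .refl _
  | tail _ h ih => exact .trans _ _ _ ih (.rel _ _ h)

lemma eqvGen_mono {X : Type} {r r' : X → X → Prop} (h : ∀ x y, r x y → r' x y)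
    {x y : X} (hxy : Relation.EqvGen r x y) : Relation.EqvGen r' x y := by
  induction hxy with
  | rel a b hab => exact .rel _ _ (h _ _ hab)
  | refl a => exact .refl a
  | symm _ _ _ ih => exact .symm _ _ ih
  | trans _ _ _ _ _ ih1 ih2 => exact .trans _ _ _ ih1 ih2

/-- adding one identified pair decreases the number of classes by at most 1 -/
lemma card_quot_le_card_quot_add_one {X : Type} [Finite X] (r r' : X → X → Prop) (a b : X)
    (h1 : ∀ x y, r' x y → r x y ∨ (x = a ∧ y = b) ∨ (x = b ∧ y = a))
    (h2 : ∀ x y, r x y → r' x y) :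
    Nat.card (Quotient (Relation.EqvGen.setoid r)) ≤
      Nat.card (Quotient (Relation.EqvGen.setoid r')) + 1 := by
  classical
  set Q := Quotient (Relation.EqvGen.setoid r)
  set Q' := Quotient (Relation.EqvGen.setoid r')
  -- key structure lemma for EqvGen r'
  have key : ∀ x y, Relation.EqvGen r' x y →
      Relation.EqvGen r x y ∨
      ((Relation.EqvGen r x a ∨ Relation.EqvGen r x b) ∧
       (Relation.EqvGen r y a ∨ Relation.EqvGen r y b)) := by
    intro x y hxy
    induction hxy with
    | rel u v huv =>
      rcases h1 _ _ huv with h | ⟨rfl, rfl⟩ | ⟨rfl, rfl⟩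
      · exact Or.inl (.rel _ _ h)
      · exact Or.inr ⟨Or.inl (.refl _), Or.inr (.refl _)⟩
      · exact Or.inr ⟨Or.inr (.refl _), Or.inl (.refl _)⟩
    | refl u => exact Or.inl (.refl _)
    | symm u v _ ih =>
      rcases ih with h | ⟨hu, hv⟩
      · exact Or.inl (.symm _ _ h)
      · exact Or.inr ⟨hv, hu⟩
    | trans u v w _ _ ih1 ih2 =>
      rcases ih1 with h1' | ⟨hu, hv⟩
      · rcases ih2 with h2' | ⟨hv', hw⟩
        · exact Or.inl (.trans _ _ _ h1' h2')
        · refine Or.inr ⟨?_, hw⟩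
          rcases hv' with hv' | hv'
          · exact Or.inl (.trans _ _ _ h1' hv')
          · exact Or.inr (.trans _ _ _ h1' hv')
      · rcases ih2 with h2' | ⟨hv', hw⟩
        · refine Or.inr ⟨hu, ?_⟩
          rcases hv with hv | hv
          · exact Or.inl (.trans _ _ _ (.symm _ _ h2') hv)
          · exact Or.inr (.trans _ _ _ (.symm _ _ h2') hv)
        · exact Or.inr ⟨hu, hw⟩
  let φ : Q → Q' := Quotient.map id (fun x y hxy => eqvGen_mono h2 hxy)
  let A : Q := Quotient.mk _ a
  have hinj : Function.Injective (fun q : {q : Q // q ≠ A} => φ q.1) := by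
    rintro ⟨q1, hq1⟩ ⟨q2, hq2⟩ heq
    induction q1 using Quotient.ind with | _ x =>
    induction q2 using Quotient.ind with | _ y =>
    simp only [Subtype.mk.injEq]
    have : Relation.EqvGen r' x y := Quotient.exact heq
    rcases key _ _ this with h | ⟨hx, hy⟩
    · exact Quotient.sound h
    · rcases hx with hx | hx
      · exact absurd (Quotient.sound hx) hq1
      · rcases hy with hy | hy
        · exact absurd (Quotient.sound hy) hq2
        · exact Quotient.sound (.trans _ _ _ hx (.symm _ _ hy))
  have h3 : Nat.card {q : Q // q ≠ A} ≤ Nat.card Q' := Nat.card_le_card_of_injective _ hinj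
  have : Fintype Q := Fintype.ofFinite Q
  have h4 : Nat.card Q = Nat.card {q : Q // q ≠ A} + 1 := by
    rw [Nat.card_eq_fintype_card, Nat.card_eq_fintype_card]
    have h5 : Fintype.card {q : Q // ¬ q = A} = Fintype.card Q - Fintype.card {q : Q // q = A} :=
      Fintype.card_subtype_compl _
    have h6 : Fintype.card {q : Q // q = A} = 1 := Fintype.card_subtype_eq A
    have h7 : Fintype.card {q : Q // q ≠ A} = Fintype.card {q : Q // ¬ q = A} := rfl
    have hle : 1 ≤ Fintype.card Q := Fintype.card_pos_iff.mpr ⟨A⟩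
    omega
  omega


namespace FinGraph

lemma sym2_repr {V : Type} (z : Sym2 V) : ∃ x y, z = s(x, y) := by
  induction z using Sym2.ind with | _ x y => exact ⟨x, y, rfl⟩

lemma card_V_le (H : FinGraph) :
    Fintype.card H.V ≤ numComponents H + Fintype.card H.E := by
  classical
  let AdjF : Finset H.E → H.V → H.V → Prop := fun F v w => ∃ e ∈ F, H.ψ e = s(v, w)
  have main : ∀ F : Finset H.E,
      Fintype.card H.V ≤ Nat.card (Quotient (Relation.EqvGen.setoid (AdjF F))) + F.card := by
    intro F
    induction F using Finset.induction_on with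
    | empty =>
      have h0 : AdjF ∅ = fun _ _ => False := by
        funext v w; simp [AdjF]
      rw [h0]
      have hbij : Function.Bijective
          (Quotient.mk (Relation.EqvGen.setoid (fun (_ _ : H.V) => False))) := by
        constructor
        · intro x y hxy
          exact eqvGen_bot (Quotient.exact hxy)
        · intro q; induction q using Quotient.ind with | _ x => exact ⟨x, rfl⟩
      rw [← Nat.card_eq_of_bijective _ hbij, Nat.card_eq_fintype_card]
      simp
    | @insert e F he ih =>
      obtain ⟨a, b, hs⟩ := sym2_repr (H.ψ e)
      have hstep := card_quot_le_card_quot_add_one (AdjF F) (AdjF (insert e F)) a b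
        (by
          rintro x y ⟨e', he', hψ⟩
          rcases Finset.mem_insert.mp he' with rfl | he'
          · rw [hs] at hψ
            rcases Sym2.eq_iff.mp hψ with ⟨rfl, rfl⟩ | ⟨rfl, rfl⟩
            · exact Or.inr (Or.inl ⟨rfl, rfl⟩)
            · exact Or.inr (Or.inr ⟨rfl, rfl⟩)
          · exact Or.inl ⟨e', he', hψ⟩)
        (by
          rintro x y ⟨e', he', hψ⟩
          exact ⟨e', Finset.mem_insert_of_mem he', hψ⟩)
      rw [Finset.card_insert_of_notMem he]
      omega
  have hfin : AdjF Finset.univ = H.Adj := by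
    funext v w
    simp [AdjF, Adj]
  have := main Finset.univ
  rw [hfin, Finset.card_univ] at this
  exact this

lemma numComponents_eq_one (H : FinGraph) (h : H.Connected) : numComponents H = 1 := by
  obtain ⟨⟨v⟩, hconn⟩ := h
  have hall : ∀ q : Quotient (Relation.EqvGen.setoid H.Adj), q = Quotient.mk _ v := by
    intro q
    induction q using Quotient.ind with | _ w =>
    exact Quotient.sound (rtg_eqvGen (hconn w v))
  unfold numComponents
  have : Nonempty (Quotient (Relation.EqvGen.setoid H.Adj)) := ⟨Quotient.mk _ v⟩
  have : Subsingleton (Quotient (Relation.EqvGen.setoid H.Adj)) :=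
    ⟨fun a b => (hall a).trans (hall b).symm⟩
  exact Nat.card_eq_one_iff_unique.mpr ⟨‹_›, ‹_›⟩

lemma bridge_lemma (H : FinGraph) (hconn : H.Connected)
    (hcard : (Fintype.card H.V : ℤ) = Fintype.card H.E + 1)
    (ε : H.E) (a b : H.V) (hab : H.ψ ε = s(a, b)) :
    ∃ S : H.V → Prop, S a ∧ ¬ S b ∧
      ∀ e : H.E, e ≠ ε → ∀ v w, H.ψ e = s(v, w) → (S v ↔ S w) := by
  classical
  set Adj' : H.V → H.V → Prop := fun v w => ∃ e : H.E, e ≠ ε ∧ H.ψ e = s(v, w) with hAdj'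
  have hsymm : Symmetric Adj' := by
    rintro v w ⟨e, he, h⟩
    exact ⟨e, he, by rwa [Sym2.eq_swap]⟩
  by_cases hr : Relation.ReflTransGen Adj' a b
  · exfalso
    let H' : FinGraph := FinGraph.mk H.V {e : H.E // e ≠ ε} (fun e => H.ψ e.1)
    have hA : ∀ v w, Adj' v w ↔ H'.Adj v w := by
      intro v w
      constructor
      · rintro ⟨e, he, h⟩; exact ⟨⟨e, he⟩, h⟩
      · rintro ⟨⟨e, he⟩, h⟩; exact ⟨e, he, h⟩
    have hc' : H'.Connected := by
      refine ⟨hconn.1, fun v w => ?_⟩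
      have hr' : Relation.ReflTransGen H'.Adj a b := by
        refine Relation.ReflTransGen.mono ?_ _ _ hr
        intro x y hxy; exact (hA x y).mp hxy
      have := hconn.2 v w
      induction this with
      | refl => exact .refl
      | tail _ hst ih =>
        obtain ⟨e, he⟩ := hst
        by_cases heε : e = ε
        · subst heε
          rw [hab] at he
          rcases Sym2.eq_iff.mp he with ⟨rfl, rfl⟩ | ⟨rfl, rfl⟩
          · exact ih.trans hr'
          · refine ih.trans (@Std.Symm.symm _ _ (@Relation.ReflTransGen.stdSymm _ H'.Adj ⟨?_⟩) _ _ hr')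
            rintro x y ⟨⟨e', he'⟩, h⟩
            exact ⟨⟨e', he'⟩, by rwa [Sym2.eq_swap]⟩
        · exact ih.tail ((hA _ _).mp ⟨e, heε, he⟩)
    have h1 := card_V_le H'
    rw [numComponents_eq_one H' hc'] at h1
    have h2 : Fintype.card H'.E = Fintype.card H.E - 1 := by
      have : Fintype.card {e : H.E // ¬ e = ε} =
          Fintype.card H.E - Fintype.card {e : H.E // e = ε} :=
        Fintype.card_subtype_compl _
      rw [Fintype.card_subtype_eq] at this
      exact this
    have h3 : 1 ≤ Fintype.card H.E := Fintype.card_pos_iff.mpr ⟨ε⟩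
    have h4 : Fintype.card H'.V = Fintype.card H.V := rfl
    omega
  · refine ⟨fun x => Relation.ReflTransGen Adj' a x, .refl, hr, ?_⟩
    intro e he v w hψ
    constructor
    · intro hv; exact hv.tail ⟨e, he, hψ⟩
    · intro hw; exact hw.tail (hsymm ⟨e, he, hψ⟩)

end FinGraph
end AuxMGraph

section Invol

/-- The setoid identifying each point with its image under an involution. -/
def involSetoid {X : Type} (j : X → X) (hj : ∀ x, j (j x) = x) : Setoid X where
  r x y := y = x ∨ y = j x
  iseqv := by
    refine ⟨fun x => Or.inl rfl, ?_, ?_⟩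
    · rintro x y (rfl | rfl)
      · exact Or.inl rfl
      · exact Or.inr (hj x).symm
    · intro x y z h1 h2
      rcases h1 with rfl | rfl <;> rcases h2 with rfl | rfl <;>
        first
          | exact Or.inl rfl
          | exact Or.inr rfl
          | exact Or.inl (hj _)
          | exact Or.inl (hj _).symm
          | exact Or.inr (hj _)
          | exact Or.inr (hj _).symm

lemma involSetoid_mk_eq {X : Type} (j : X → X) (hj : ∀ x, j (j x) = x) (z x : X) :
    (Quotient.mk (involSetoid j hj) z = Quotient.mk (involSetoid j hj) x) ↔
      (z = x ∨ z = j x) := by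
  constructor
  · intro h
    rcases Quotient.exact h with h | h
    · exact Or.inl h.symm
    · right; rw [h, hj]
  · rintro (rfl | rfl)
    · rfl
    · exact Quotient.sound (Or.inr (hj x).symm)

lemma two_mul_card_quotient {X : Type} [Fintype X] [DecidableEq X]
    (j : X → X) (hj : ∀ x, j (j x) = x) :
    2 * Nat.card (Quotient (involSetoid j hj)) =
      Fintype.card X + Fintype.card {x : X // j x = x} := by
  classical
  letI : Fintype (Quotient (involSetoid j hj)) := Fintype.ofFinite _
  set Q := Quotient (involSetoid j hj) with hQ
  have key : ∀ c : Q,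
      (Finset.univ.filter (fun z : X => Quotient.mk (involSetoid j hj) z = c)).card
      + (Finset.univ.filter (fun z : X => j z = z ∧
          Quotient.mk (involSetoid j hj) z = c)).card = 2 := by
    intro c
    obtain ⟨x, rfl⟩ := Quotient.exists_rep c
    by_cases hx : j x = x
    · have h1 : (Finset.univ.filter (fun z : X =>
          Quotient.mk (involSetoid j hj) z = Quotient.mk (involSetoid j hj) x)) = {x} := by
        ext z
        simp only [Finset.mem_filter, Finset.mem_univ, true_and, Finset.mem_singleton,
          involSetoid_mk_eq j hj, hx, or_self]
      have h2 : (Finset.univ.filter (fun z : X => j z = z ∧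
          Quotient.mk (involSetoid j hj) z = Quotient.mk (involSetoid j hj) x)) = {x} := by
        ext z
        simp only [Finset.mem_filter, Finset.mem_univ, true_and, Finset.mem_singleton,
          involSetoid_mk_eq j hj, hx, or_self]
        constructor
        · rintro ⟨_, rfl⟩; rfl
        · rintro rfl; exact ⟨hx, rfl⟩
      rw [h1, h2]
      simp
    · have h1 : (Finset.univ.filter (fun z : X =>
          Quotient.mk (involSetoid j hj) z = Quotient.mk (involSetoid j hj) x)) = {x, j x} := by
        ext z
        simp only [Finset.mem_filter, Finset.mem_univ, true_and, Finset.mem_insert,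
          Finset.mem_singleton, involSetoid_mk_eq j hj]
      have h2 : (Finset.univ.filter (fun z : X => j z = z ∧
          Quotient.mk (involSetoid j hj) z = Quotient.mk (involSetoid j hj) x)) = ∅ := by
        ext z
        simp only [Finset.mem_filter, Finset.mem_univ, true_and, Finset.notMem_empty,
          iff_false, not_and, involSetoid_mk_eq j hj]
        rintro hz (rfl | rfl)
        · exact hx hz
        · exact hx (by conv_lhs => rw [← hz]; rw [hj])
      rw [h1, h2, Finset.card_insert_of_notMem (by simpa using fun h => hx h.symm)]
      simp
  have hX : Fintype.card X =
      ∑ c : Q, (Finset.univ.filter (fun z : X => Quotient.mk (involSetoid j hj) z = c)).card := by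
    rw [← Finset.card_univ]
    exact Finset.card_eq_sum_card_fiberwise (fun x _ => Finset.mem_univ _)
  have hF : Fintype.card {x : X // j x = x} =
      ∑ c : Q, (Finset.univ.filter (fun z : X => j z = z ∧
          Quotient.mk (involSetoid j hj) z = c)).card := by
    rw [Fintype.card_subtype]
    rw [Finset.card_eq_sum_card_fiberwise
      (f := fun z => Quotient.mk (involSetoid j hj) z) (t := Finset.univ)
      (fun x _ => Finset.mem_univ _)]
    congr 1
    funext c
    rw [Finset.filter_filter]
  rw [hX, hF, ← Finset.sum_add_distrib, Nat.card_eq_fintype_card]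
  rw [Finset.sum_congr rfl (fun c _ => key c), Finset.sum_const, Finset.card_univ]
  ring

lemma sum_card_fiber {X Y : Type} [Fintype X] [Fintype Y] [DecidableEq Y] (f : X → Y) :
    ∑ c : Y, Nat.card {x : X // f x = c} = Nat.card X := by
  classical
  simp only [Nat.card_eq_fintype_card, Fintype.card_subtype]
  rw [← Finset.card_univ (α := X)]
  exact (Finset.card_eq_sum_card_fiberwise (fun x _ => Finset.mem_univ (f x))).symm

end Invol

namespace FinGraph

section LapBasics

variable (G : FinGraph)

lemma edgeLap_eq (f : G.V → ℤ) (e : G.E) (x y : G.V) (h : G.ψ e = s(x, y)) :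
    edgeLap G f e = fun v =>
      (if v = x then f y - f x else 0) + (if v = y then f x - f y else 0) := by
  unfold edgeLap
  rw [h, Sym2.lift_mk]

lemma edgeLap_const (f : G.V → ℤ) (e : G.E) (x y : G.V) (h : G.ψ e = s(x, y))
    (hf : f x = f y) : edgeLap G f e = 0 := by
  rw [edgeLap_eq G f e x y h]
  funext v
  simp [hf]

lemma edgeLap_add (f g : G.V → ℤ) (e : G.E) :
    edgeLap G (f + g) e = edgeLap G f e + edgeLap G g e := by
  obtain ⟨x, y, h⟩ := sym2_repr (G.ψ e)
  rw [edgeLap_eq G _ e x y h, edgeLap_eq G _ e x y h, edgeLap_eq G _ e x y h]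
  funext v
  simp only [Pi.add_apply]
  split_ifs <;> ring

lemma edgeLap_neg (f : G.V → ℤ) (e : G.E) :
    edgeLap G (-f) e = - edgeLap G f e := by
  obtain ⟨x, y, h⟩ := sym2_repr (G.ψ e)
  rw [edgeLap_eq G _ e x y h, edgeLap_eq G _ e x y h]
  funext v
  simp only [Pi.neg_apply]
  split_ifs <;> ring

lemma edgeLap_zero (e : G.E) : edgeLap G 0 e = 0 := by
  obtain ⟨x, y, h⟩ := sym2_repr (G.ψ e)
  rw [edgeLap_eq G _ e x y h]
  funext v
  simp

lemma Lap_add (f g : G.V → ℤ) : Lap G (f + g) = Lap G f + Lap G g := by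
  funext v
  simp only [Lap, edgeLap_add, Pi.add_apply]
  rw [← Finset.sum_add_distrib]

lemma Lap_neg (f : G.V → ℤ) : Lap G (-f) = - Lap G f := by
  funext v
  simp only [Lap, edgeLap_neg, Pi.neg_apply]
  rw [← Finset.sum_neg_distrib]

lemma Lap_zero : Lap G (0 : G.V → ℤ) = 0 := by
  funext v
  simp [Lap, edgeLap_zero]

lemma linEquiv_refl (D : G.V → ℤ) : LinEquiv G D D :=
  ⟨0, by rw [Lap_zero, add_zero]⟩

lemma linEquiv_symm {D₁ D₂ : G.V → ℤ} (h : LinEquiv G D₁ D₂) : LinEquiv G D₂ D₁ := by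
  obtain ⟨f, rfl⟩ := h
  exact ⟨-f, by rw [Lap_neg]; abel⟩

lemma linEquiv_trans {D₁ D₂ D₃ : G.V → ℤ} (h1 : LinEquiv G D₁ D₂) (h2 : LinEquiv G D₂ D₃) :
    LinEquiv G D₁ D₃ := by
  obtain ⟨f, rfl⟩ := h1
  obtain ⟨g, rfl⟩ := h2
  exact ⟨f + g, by rw [Lap_add]; abel⟩

end LapBasics
end FinGraph

namespace FinGraph
section Main

variable {G : FinGraph} (σ : RealStructure G)

/-- The setoid identifying conjugate vertices. -/
def vSetoid : Setoid G.V := involSetoid σ.ιV σ.ιV_invol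

/-- The setoid identifying conjugate edges. -/
def eSetoid : Setoid G.E := involSetoid σ.ιE σ.ιE_invol

lemma mkV_ι (x : G.V) :
    Quotient.mk (vSetoid σ) (σ.ιV x) = Quotient.mk (vSetoid σ) x :=
  Quotient.sound (Or.inr (σ.ιV_invol x).symm)

lemma vSetoid_mk_eq (z x : G.V) :
    (Quotient.mk (vSetoid σ) z = Quotient.mk (vSetoid σ) x) ↔ (z = x ∨ z = σ.ιV x) :=
  involSetoid_mk_eq _ _ z x

lemma eSetoid_mk_eq (z x : G.E) :
    (Quotient.mk (eSetoid σ) z = Quotient.mk (eSetoid σ) x) ↔ (z = x ∨ z = σ.ιE x) :=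
  involSetoid_mk_eq _ _ z x

/-- The quotient graph `G/ι`. -/
noncomputable def quotGraph : FinGraph :=
  @FinGraph.mk (Quotient (vSetoid σ)) (Quotient (eSetoid σ))
    (Classical.decEq _) (Fintype.ofFinite _) (Fintype.ofFinite _)
    (Quotient.lift (fun e => (G.ψ e).map (Quotient.mk (vSetoid σ)))
      (by
        intro e e' h
        show (G.ψ e).map (Quotient.mk (vSetoid σ)) = (G.ψ e').map (Quotient.mk (vSetoid σ))
        rcases h with h | h
        · rw [h]
        · rw [h, σ.compat, Sym2.map_map]
          congr 1
          funext x
          exact (mkV_ι σ x).symm))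

lemma quotGraph_ψ (e : G.E) :
    (quotGraph σ).ψ (Quotient.mk (eSetoid σ) e) = (G.ψ e).map (Quotient.mk (vSetoid σ)) := rfl

lemma quotGraph_connected (h : G.Connected) : (quotGraph σ).Connected := by
  obtain ⟨⟨v⟩, hc⟩ := h
  refine ⟨⟨Quotient.mk _ v⟩, ?_⟩
  intro a b
  induction a using Quotient.ind with | _ x =>
  induction b using Quotient.ind with | _ y =>
  refine Relation.ReflTransGen.lift (Quotient.mk (vSetoid σ)) ?_ _ _ (hc x y)
  rintro p q ⟨e, he⟩
  exact ⟨Quotient.mk (eSetoid σ) e, by rw [quotGraph_ψ, he, Sym2.map_pair_eq]; rfl⟩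

instance : DecidablePred (RealV σ) := fun v => G.decV (σ.ιV v) v

instance : Fintype (RV σ) := by unfold RV; infer_instance

instance : Finite (CompR σ) := by unfold CompR; exact Quotient.finite _

lemma cardV_eq :
    2 * Nat.card (Quotient (vSetoid σ)) = Fintype.card G.V + Nat.card (RV σ) := by
  have h := two_mul_card_quotient σ.ιV σ.ιV_invol
  have h2 : Nat.card (RV σ) = Fintype.card {x : G.V // σ.ιV x = x} := by
    rw [Nat.card_eq_fintype_card]
    rfl
  rw [h2]
  exact h

lemma cardE_eq (hni : ∀ e : G.E, ¬ IsolatedRealE σ e) :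
    2 * Nat.card (Quotient (eSetoid σ)) =
      Fintype.card G.E + Nat.card {e : G.E // NonIsolatedRealE σ e} := by
  classical
  have h2 : Nat.card {e : G.E // σ.ιE e = e} =
      Nat.card {e : G.E // NonIsolatedRealE σ e} := by
    apply Nat.card_congr
    apply Equiv.subtypeEquivRight
    intro e
    constructor
    · intro hre
      by_cases hall : ∀ v ∈ G.ψ e, RealV σ v
      · exact ⟨hre, hall⟩
      · push_neg at hall
        obtain ⟨v, hv, hnr⟩ := hall
        exact absurd ⟨hre, v, hv, hnr⟩ (hni e)
    · exact fun h => h.1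
  calc 2 * Nat.card (Quotient (eSetoid σ))
      = Fintype.card G.E + Fintype.card {e : G.E // σ.ιE e = e} :=
        two_mul_card_quotient σ.ιE σ.ιE_invol
    _ = Fintype.card G.E + Nat.card {e : G.E // σ.ιE e = e} := by
        rw [Nat.card_eq_fintype_card]
    _ = Fintype.card G.E + Nat.card {e : G.E // NonIsolatedRealE σ e} := by rw [h2]

lemma FV_sub_FE :
    (Nat.card (RV σ) : ℤ) - (Nat.card {e : G.E // NonIsolatedRealE σ e} : ℤ)
      = 2 * (Nat.card (CompR σ) : ℤ) - sNum σ
        + (Nat.card {e : G.E // IsolatedRealE σ e} : ℤ) := by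
  classical
  letI : Fintype (CompR σ) := Fintype.ofFinite _
  letI : DecidableEq (CompR σ) := Classical.decEq _
  letI : Fintype {e : G.E // NonIsolatedRealE σ e} := Fintype.ofFinite _
  -- endpoints of non-isolated real edges, as real vertices
  have hend : ∀ x : {e : G.E // NonIsolatedRealE σ e}, ∃ v : RV σ, v.1 ∈ G.ψ x.1 := by
    rintro ⟨e, he⟩
    obtain ⟨a, b, hab⟩ := sym2_repr (G.ψ e)
    have ha : a ∈ G.ψ e := by rw [hab]; exact Sym2.mem_mk_left a b
    exact ⟨⟨a, he.2 a ha⟩, ha⟩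
  have hsame : ∀ (e : G.E), NonIsolatedRealE σ e → ∀ v w : RV σ, v.1 ∈ G.ψ e → w.1 ∈ G.ψ e →
      (Quotient.mk (Relation.EqvGen.setoid (adjR σ)) v : CompR σ) =
        Quotient.mk (Relation.EqvGen.setoid (adjR σ)) w := by
    intro e he v w hv hw
    obtain ⟨a, b, hab⟩ := sym2_repr (G.ψ e)
    rw [hab, Sym2.mem_iff] at hv hw
    apply Quotient.sound
    have hadj : ∀ (p q : RV σ), p.1 = a → q.1 = b → Relation.EqvGen (adjR σ) p q := by
      intro p q hp hq
      exact Relation.EqvGen.rel _ _ ⟨e, he, by rw [hab, hp, hq]⟩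
    rcases hv with hv | hv <;> rcases hw with hw | hw
    · rw [Subtype.ext (hv.trans hw.symm)]
    · exact hadj v w hv hw
    · exact Relation.EqvGen.symm _ _ (hadj w v hw hv)
    · rw [Subtype.ext (hv.trans hw.symm)]
  set κ : {e : G.E // NonIsolatedRealE σ e} → CompR σ :=
    fun x => Quotient.mk _ (Classical.choose (hend x)) with hκ
  have hE : ∀ c : CompR σ,
      Nat.card {e : G.E // NonIsolatedRealE σ e ∧ ∃ v : RV σ, v.1 ∈ G.ψ e ∧
        Quotient.mk (Relation.EqvGen.setoid (adjR σ)) v = c} =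
      Nat.card {x : {e : G.E // NonIsolatedRealE σ e} // κ x = c} := by
    intro c
    apply Nat.card_congr
    refine ⟨fun x => ⟨⟨x.1, x.2.1⟩, ?_⟩,
      fun y => ⟨y.1.1, y.1.2, Classical.choose (hend y.1),
        Classical.choose_spec (hend y.1), y.2⟩,
      fun x => Subtype.ext rfl, fun y => Subtype.ext (Subtype.ext rfl)⟩
    obtain ⟨v, hv, hc⟩ := x.2.2
    exact (hsame x.1 x.2.1 _ v (Classical.choose_spec (hend ⟨x.1, x.2.1⟩)) hv).trans hc
  have hEsum : ∑ c : CompR σ, Nat.card {e : G.E // NonIsolatedRealE σ e ∧ ∃ v : RV σ,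
      v.1 ∈ G.ψ e ∧ Quotient.mk (Relation.EqvGen.setoid (adjR σ)) v = c}
      = Nat.card {e : G.E // NonIsolatedRealE σ e} := by
    rw [Finset.sum_congr rfl (fun c _ => hE c)]
    exact sum_card_fiber κ
  have hVsum : ∑ c : CompR σ,
      Nat.card {v : RV σ // Quotient.mk (Relation.EqvGen.setoid (adjR σ)) v = c}
      = Nat.card (RV σ) :=
    sum_card_fiber _
  have hsum : sNum σ = (Nat.card {e : G.E // IsolatedRealE σ e} : ℤ)
      + ∑ c : CompR σ, (compGenus σ c + 1) := by
    unfold sNum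
    rw [finsum_eq_sum_of_fintype]
  have hsplit : ∑ c : CompR σ, (compGenus σ c + 1)
      = 2 * (Fintype.card (CompR σ) : ℤ)
        + ∑ c : CompR σ, (Nat.card {e : G.E // NonIsolatedRealE σ e ∧ ∃ v : RV σ,
            v.1 ∈ G.ψ e ∧ Quotient.mk (Relation.EqvGen.setoid (adjR σ)) v = c} : ℤ)
        - ∑ c : CompR σ, (Nat.card {v : RV σ //
            Quotient.mk (Relation.EqvGen.setoid (adjR σ)) v = c} : ℤ) := by
    unfold compGenus
    rw [Finset.sum_add_distrib, Finset.sum_sub_distrib, Finset.sum_add_distrib,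
      Finset.sum_const, Finset.card_univ]
    push_cast
    ring
  have hc1 : (Nat.card (CompR σ) : ℤ) = (Fintype.card (CompR σ) : ℤ) := by
    rw [Nat.card_eq_fintype_card]
  have hc2 : (∑ c : CompR σ, (Nat.card {e : G.E // NonIsolatedRealE σ e ∧ ∃ v : RV σ,
      v.1 ∈ G.ψ e ∧ Quotient.mk (Relation.EqvGen.setoid (adjR σ)) v = c} : ℤ))
      = (Nat.card {e : G.E // NonIsolatedRealE σ e} : ℤ) := by
    rw [← hEsum]; push_cast; rfl
  have hc3 : (∑ c : CompR σ, (Nat.card {v : RV σ //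
      Quotient.mk (Relation.EqvGen.setoid (adjR σ)) v = c} : ℤ))
      = (Nat.card (RV σ) : ℤ) := by
    rw [← hVsum]; push_cast; rfl
  rw [hsum, hsplit, hc2, hc3, hc1]
  ring

lemma quot_card_eq (hM : IsStrongMGraph σ) :
    (Fintype.card (quotGraph σ).V : ℤ) = (Fintype.card (quotGraph σ).E : ℤ) + 1 := by
  have hni := hM.1.2.1
  have h1 := cardV_eq σ
  have h2 := cardE_eq σ hni
  have h3 := FV_sub_FE σ
  have hiso : Nat.card {e : G.E // IsolatedRealE σ e} = 0 := by
    have : IsEmpty {e : G.E // IsolatedRealE σ e} := ⟨fun x => hni x.1 x.2⟩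
    exact Nat.card_of_isEmpty
  have hg : G.genus = 1 + (Fintype.card G.E : ℤ) - (Fintype.card G.V : ℤ) := by
    unfold genus
    rw [numComponents_eq_one G hM.1.1]
    push_cast
    ring
  have hsnum := hM.1.2.2
  have hncc := hM.2
  have hV' : Fintype.card (quotGraph σ).V = Nat.card (Quotient (vSetoid σ)) :=
    Nat.card_eq_fintype_card.symm
  have hE' : Fintype.card (quotGraph σ).E = Nat.card (Quotient (eSetoid σ)) :=
    Nat.card_eq_fintype_card.symm
  rw [hV', hE']
  rw [hiso] at h3
  have h1' : 2 * (Nat.card (Quotient (vSetoid σ)) : ℤ)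
      = (Fintype.card G.V : ℤ) + (Nat.card (RV σ) : ℤ) := by exact_mod_cast h1
  have h2' : 2 * (Nat.card (Quotient (eSetoid σ)) : ℤ)
      = (Fintype.card G.E : ℤ) + (Nat.card {e : G.E // NonIsolatedRealE σ e} : ℤ) := by
    exact_mod_cast h2
  push_cast at h3
  linarith

end Main
end FinGraph

namespace FinGraph
section Divisors

variable {G : FinGraph} (σ : RealStructure G)

open Classical in
/-- The divisor attached to a class of vertices: the sum of the class members,
with real vertices counted twice. -/
noncomputable def Pd (a : Quotient (vSetoid σ)) : G.V → ℤ :=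
  fun z => if Quotient.mk (vSetoid σ) z = a then (if σ.ιV z = z then 2 else 1) else 0

lemma Pd_mk (x : G.V) :
    Pd σ (Quotient.mk (vSetoid σ) x) = unitDiv G x + unitDiv G (σ.ιV x) := by
  classical
  funext z
  simp only [Pd, unitDiv, Pi.add_apply]
  by_cases h1 : z = x
  · subst h1
    rw [if_pos rfl, if_pos rfl]
    by_cases hzr : σ.ιV z = z
    · rw [if_pos hzr, if_pos hzr.symm]; norm_num
    · rw [if_neg hzr, if_neg (fun hh => hzr hh.symm)]; norm_num
  · by_cases h2 : z = σ.ιV x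
    · subst h2
      have hxnr : ¬ σ.ιV x = x := fun hh => h1 (by rw [hh])
      rw [if_pos ((vSetoid_mk_eq σ _ _).mpr (Or.inr rfl)), if_neg h1, if_pos rfl]
      rw [if_neg (fun hh : σ.ιV (σ.ιV x) = σ.ιV x => hxnr (by
        rw [σ.ιV_invol] at hh; exact hh.symm))]
      norm_num
    · rw [if_neg (fun hh => by
        rcases (vSetoid_mk_eq σ _ _).mp hh with hh | hh
        · exact h1 hh
        · exact h2 hh), if_neg h1, if_neg h2]
      norm_num

/-- Existence of a cut function separating the two sides of an edge of the
quotient graph. -/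
lemma cut_exists (hM : IsStrongMGraph σ) {e : G.E} {x y : G.V} (h : G.ψ e = s(x, y))
    (hmk : (Quotient.mk (vSetoid σ) x : Quotient (vSetoid σ)) ≠ Quotient.mk (vSetoid σ) y) :
    ∃ f : G.V → ℤ, f x = 1 ∧ f y = 0 ∧ (∀ z, f (σ.ιV z) = f z) ∧
      (∀ e' : G.E, Quotient.mk (eSetoid σ) e' ≠ Quotient.mk (eSetoid σ) e →
        edgeLap G f e' = 0) := by
  classical
  obtain ⟨S, hSx, hSy, hcut⟩ := bridge_lemma (quotGraph σ) (quotGraph_connected σ hM.1.1)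
    (quot_card_eq σ hM) (Quotient.mk (eSetoid σ) e) (Quotient.mk (vSetoid σ) x)
    (Quotient.mk (vSetoid σ) y)
    (by rw [quotGraph_ψ, h, Sym2.map_pair_eq]; rfl)
  refine ⟨fun z => if S (Quotient.mk (vSetoid σ) z) then 1 else 0, by simp [hSx],
    by simp [hSy], fun z => by simp only [mkV_ι], ?_⟩
  intro e' hne
  obtain ⟨p, q, hpq⟩ := sym2_repr (G.ψ e')
  refine edgeLap_const G _ e' p q hpq ?_
  have hiff := hcut (Quotient.mk (eSetoid σ) e') hne (Quotient.mk (vSetoid σ) p)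
    (Quotient.mk (vSetoid σ) q) (by rw [quotGraph_ψ, hpq, Sym2.map_pair_eq]; rfl)
  by_cases hp : S (Quotient.mk (vSetoid σ) p)
  · rw [if_pos hp, if_pos (hiff.mp hp)]
  · rw [if_neg hp, if_neg (fun hq => hp (hiff.mpr hq))]

lemma if_neg_one (v x : G.V) [Decidable (v = x)] :
    (if v = x then (-1 : ℤ) else 0) = -(if v = x then (1 : ℤ) else 0) := by
  split_ifs <;> ring

/-- Crossing a real edge: the two (real) endpoints are linearly equivalent. -/
lemma cut_real_edge (hM : IsStrongMGraph σ) {e : G.E} {x y : G.V} (h : G.ψ e = s(x, y))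
    (hre : σ.ιE e = e)
    (hmk : (Quotient.mk (vSetoid σ) x : Quotient (vSetoid σ)) ≠ Quotient.mk (vSetoid σ) y) :
    ∃ g : G.V → ℤ, Lap G g = unitDiv G y - unitDiv G x := by
  classical
  obtain ⟨f, hfx, hfy, hfι, hzero⟩ := cut_exists σ hM h hmk
  refine ⟨f, ?_⟩
  funext v
  have hsingle : Lap G f v = edgeLap G f e v := by
    unfold Lap
    refine Finset.sum_eq_single e (fun e' _ hne => ?_) (fun hh => absurd (Finset.mem_univ e) hh)
    have : Quotient.mk (eSetoid σ) e' ≠ Quotient.mk (eSetoid σ) e := by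
      intro hh
      rcases (eSetoid_mk_eq σ _ _).mp hh with hh | hh
      · exact hne hh
      · rw [hre] at hh; exact hne hh
    rw [hzero e' this]
    rfl
  rw [hsingle, edgeLap_eq G f e x y h, hfx, hfy]
  simp only [Pi.sub_apply, unitDiv]
  split_ifs <;> ring

/-- Crossing a non-real edge pair: the conjugate-pair divisors of the two sides
are linearly equivalent. -/
lemma cut_nonreal_edge (hM : IsStrongMGraph σ) {e : G.E} {x y : G.V} (h : G.ψ e = s(x, y))
    (hre : ¬ σ.ιE e = e)
    (hmk : (Quotient.mk (vSetoid σ) x : Quotient (vSetoid σ)) ≠ Quotient.mk (vSetoid σ) y) :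
    ∃ g : G.V → ℤ, Lap G g =
      unitDiv G y + unitDiv G (σ.ιV y) - unitDiv G x - unitDiv G (σ.ιV x) := by
  classical
  obtain ⟨f, hfx, hfy, hfι, hzero⟩ := cut_exists σ hM h hmk
  refine ⟨f, ?_⟩
  have hψι : G.ψ (σ.ιE e) = s(σ.ιV x, σ.ιV y) := by rw [σ.compat, h, Sym2.map_pair_eq]
  funext v
  have hpair : Lap G f v = edgeLap G f e v + edgeLap G f (σ.ιE e) v := by
    unfold Lap
    rw [← Finset.sum_subset (Finset.subset_univ {e, σ.ιE e}) (fun e' _ he' => ?_)]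
    · rw [Finset.sum_pair (fun hh : e = σ.ιE e => hre hh.symm)]
    · have : Quotient.mk (eSetoid σ) e' ≠ Quotient.mk (eSetoid σ) e := by
        intro hh
        rcases (eSetoid_mk_eq σ _ _).mp hh with hh | hh
        · exact he' (by rw [hh]; exact Finset.mem_insert_self _ _)
        · exact he' (by rw [hh]; exact Finset.mem_insert_of_mem (Finset.mem_singleton_self _))
      rw [hzero e' this]
      rfl
  rw [hpair, edgeLap_eq G f e x y h, edgeLap_eq G f (σ.ιE e) _ _ hψι, hfx, hfy,
    hfι x, hfι y, hfx, hfy]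
  simp only [Pi.sub_apply, Pi.add_apply, unitDiv]
  split_ifs <;> ring

/-- Crossing any edge of the quotient graph: the `Pd` divisors of its two ends
are linearly equivalent. -/
lemma Pd_step (hM : IsStrongMGraph σ) {e : G.E} {x y : G.V} (h : G.ψ e = s(x, y)) :
    ∃ g : G.V → ℤ,
      Pd σ (Quotient.mk (vSetoid σ) y) = Pd σ (Quotient.mk (vSetoid σ) x) + Lap G g := by
  classical
  by_cases hmk : (Quotient.mk (vSetoid σ) x : Quotient (vSetoid σ)) = Quotient.mk (vSetoid σ) y
  · exact ⟨0, by rw [Lap_zero, add_zero, hmk]⟩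
  · by_cases hre : σ.ιE e = e
    · -- real edge: both endpoints are real
      have hni : NonIsolatedRealE σ e := by
        by_cases hall : ∀ v ∈ G.ψ e, RealV σ v
        · exact ⟨hre, hall⟩
        · push_neg at hall
          obtain ⟨v, hv, hnr⟩ := hall
          exact absurd ⟨hre, v, hv, hnr⟩ (hM.1.2.1 e)
      have hxr : σ.ιV x = x := hni.2 x (by rw [h]; exact Sym2.mem_mk_left x y)
      have hyr : σ.ιV y = y := hni.2 y (by rw [h]; exact Sym2.mem_mk_right x y)
      obtain ⟨g, hg⟩ := cut_real_edge σ hM h hre hmk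
      refine ⟨g + g, ?_⟩
      rw [Lap_add, hg, Pd_mk, Pd_mk, hxr, hyr]
      abel
    · obtain ⟨g, hg⟩ := cut_nonreal_edge σ hM h hre hmk
      refine ⟨g, ?_⟩
      rw [hg, Pd_mk, Pd_mk]
      abel

/-- Telescoping along walks in the quotient graph. -/
lemma Pd_equiv (hM : IsStrongMGraph σ) (a b : Quotient (vSetoid σ)) :
    ∃ g : G.V → ℤ, Pd σ b = Pd σ a + Lap G g := by
  have hconn := (quotGraph_connected σ hM.1.1).2 a b
  induction hconn with
  | refl => exact ⟨0, by rw [Lap_zero, add_zero]⟩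
  | @tail m c hrt hadj ih =>
    obtain ⟨g1, hg1⟩ := ih
    obtain ⟨ε, hε⟩ := hadj
    induction ε using Quotient.ind with | _ e =>
    obtain ⟨p, q, hpq⟩ := sym2_repr (G.ψ e)
    rw [quotGraph_ψ, hpq, Sym2.map_pair_eq] at hε
    rcases Sym2.eq_iff.mp hε with ⟨h1, h2⟩ | ⟨h1, h2⟩
    · obtain ⟨g2, hg2⟩ := Pd_step σ hM hpq
      rw [h1, h2] at hg2
      exact ⟨g1 + g2, by rw [Lap_add, hg2, hg1]; abel⟩
    · obtain ⟨g2, hg2⟩ := Pd_step σ hM (show G.ψ e = s(q, p) from by rw [hpq, Sym2.eq_swap])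
      rw [h1, h2] at hg2
      exact ⟨g1 + g2, by rw [Lap_add, hg2, hg1]; abel⟩

/-- Two real vertices joined by a non-isolated real edge are linearly
equivalent. -/
lemma unit_step (hM : IsStrongMGraph σ) {u w : RV σ} (h : adjR σ u w) :
    ∃ g : G.V → ℤ, unitDiv G w.1 = unitDiv G u.1 + Lap G g := by
  obtain ⟨e, hni, hψ⟩ := h
  by_cases huw : u.1 = w.1
  · exact ⟨0, by rw [Lap_zero, add_zero, huw]⟩
  · have hur : σ.ιV u.1 = u.1 := u.2
    have hwr : σ.ιV w.1 = w.1 := w.2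
    have hmk : (Quotient.mk (vSetoid σ) u.1 : Quotient (vSetoid σ)) ≠
        Quotient.mk (vSetoid σ) w.1 := by
      intro hh
      rcases (vSetoid_mk_eq σ _ _).mp hh with hh | hh
      · exact huw hh
      · exact huw (by rw [hh, hwr])
    obtain ⟨g, hg⟩ := cut_real_edge σ hM hψ hni.1 hmk
    exact ⟨g, by rw [hg]; abel⟩

/-- Two real vertices in the same component of `G(ℝ)` are linearly
equivalent. -/
lemma unit_eqv (hM : IsStrongMGraph σ) {u w : RV σ} (h : Relation.EqvGen (adjR σ) u w) :
    ∃ g : G.V → ℤ, unitDiv G w.1 = unitDiv G u.1 + Lap G g := by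
  induction h with
  | rel a b hab => exact unit_step σ hM hab
  | refl a => exact ⟨0, by rw [Lap_zero, add_zero]⟩
  | symm a b _ ih =>
    obtain ⟨g, hg⟩ := ih
    exact ⟨-g, by rw [Lap_neg, hg]; abel⟩
  | trans a b c _ _ ih1 ih2 =>
    obtain ⟨g1, hg1⟩ := ih1
    obtain ⟨g2, hg2⟩ := ih2
    exact ⟨g1 + g2, by rw [Lap_add, hg2, hg1]; abel⟩

end Divisors
end FinGraph

open FinGraph in
/-- On a strong M-graph, if `v'₁, v'₂` are real vertices in a
single connected component of `G(ℝ)` and likewise `v''₁, v''₂`, then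
`v'₁ + v'₂ ∼ v''₁ + v''₂`. -/
theorem strongMGraph_pairs_equiv (G : FinGraph) (σ : RealStructure G)
    (hM : IsStrongMGraph σ) (v'₁ v'₂ v''₁ v''₂ : RV σ)
    (h' : Quotient.mk (Relation.EqvGen.setoid (adjR σ)) v'₁ =
          Quotient.mk (Relation.EqvGen.setoid (adjR σ)) v'₂)
    (h'' : Quotient.mk (Relation.EqvGen.setoid (adjR σ)) v''₁ =
           Quotient.mk (Relation.EqvGen.setoid (adjR σ)) v''₂) :
    LinEquiv G (unitDiv G v'₁.1 + unitDiv G v'₂.1)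
      (unitDiv G v''₁.1 + unitDiv G v''₂.1) := by
  have h'e : Relation.EqvGen (adjR σ) v'₁ v'₂ := Quotient.exact h'
  have h''e : Relation.EqvGen (adjR σ) v''₁ v''₂ := Quotient.exact h''
  obtain ⟨g1, hg1⟩ := unit_eqv σ hM h'e
  obtain ⟨g2, hg2⟩ := unit_eqv σ hM h''e
  obtain ⟨g3, hg3⟩ := Pd_equiv σ hM (Quotient.mk (vSetoid σ) v'₁.1)
    (Quotient.mk (vSetoid σ) v''₁.1)
  have e1 : Pd σ (Quotient.mk (vSetoid σ) v'₁.1) = unitDiv G v'₁.1 + unitDiv G v'₁.1 := by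
    rw [Pd_mk, (show σ.ιV v'₁.1 = v'₁.1 from v'₁.2)]
  have e2 : Pd σ (Quotient.mk (vSetoid σ) v''₁.1) = unitDiv G v''₁.1 + unitDiv G v''₁.1 := by
    rw [Pd_mk, (show σ.ιV v''₁.1 = v''₁.1 from v''₁.2)]
  have L1 : LinEquiv G (unitDiv G v'₁.1 + unitDiv G v'₂.1)
      (unitDiv G v'₁.1 + unitDiv G v'₁.1) :=
    ⟨-g1, by rw [Lap_neg, hg1]; abel⟩
  have L2 : LinEquiv G (unitDiv G v'₁.1 + unitDiv G v'₁.1)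
      (unitDiv G v''₁.1 + unitDiv G v''₁.1) :=
    ⟨g3, by rw [← e1, ← e2, hg3]⟩
  have L3 : LinEquiv G (unitDiv G v''₁.1 + unitDiv G v''₁.1)
      (unitDiv G v''₁.1 + unitDiv G v''₂.1) :=
    ⟨g2, by rw [hg2]; abel⟩
  exact linEquiv_trans G (linEquiv_trans G L1 L2) L3
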